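/- Let f : ℝ^d → ℝ be twice continuously differentiable on a product domain (e.g., all of ℝ^d) and let i ≠ j be coordinate indices. If ∂²f/∂xᵢ∂xⱼ(x) = 0 for all x, then there exist functions f₁, f₂ such that f(x) = f₁(x_{-i}) + f₂(x_{-j}) for all x, where f₁ does not depend on coordinate i and f₂ does not depend on coordinate j. -/

import Mathlib

/-- A differentiable function whose directional derivative along `Pi.single k 1`
vanishes everywhere is independent of coordinate `k`. -/
lemma const_along_of_fderiv_zero {d : ℕ} (F : (Fin d → ℝ) → ℝ)
    (hF : Differentiable ℝ F) (k : Fin d)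
    (h0 : ∀ x, fderiv ℝ F x (Pi.single k 1) = 0) :
    ∀ x y : Fin d → ℝ, (∀ l, l ≠ k → x l = y l) → F x = F y := by
  have key : ∀ z : Fin d → ℝ, ∀ t : ℝ,
      F (Function.update z k t) = F (Function.update z k 0) := by
    intro z t
    set φ : ℝ → ℝ := fun t => F (Function.update z k t) with hφ
    have hderiv : ∀ s : ℝ, HasDerivAt φ 0 s := by
      intro s
      have hγ : HasDerivAt (fun t : ℝ => Function.update z k t) (Pi.single k 1) s := by
        have heq : (fun t : ℝ => Function.update z k t)
            = fun t => Function.update z k 0 + t • Pi.single k 1 := by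
          funext t
          funext l
          rcases eq_or_ne l k with rfl | hl
          · simp
          · simp [Function.update_of_ne hl, Pi.single_eq_of_ne hl]
        rw [heq]
        simpa using (((hasDerivAt_id s).smul_const (Pi.single k (1:ℝ))).const_add
          (Function.update z k 0))
      have := (hF (Function.update z k s)).hasFDerivAt.comp_hasDerivAt s hγ
      simp [h0] at this; exact this
    have hconst := is_const_of_deriv_eq_zero
      (fun s => (hderiv s).differentiableAt) (fun s => (hderiv s).deriv)
    exact hconst t 0
  intro x y hxy
  have hx : F x = F (Function.update x k 0) := by
    conv_lhs => rw [← Function.update_eq_self k x]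
    exact key x (x k)
  have hy : F y = F (Function.update y k 0) := by
    conv_lhs => rw [← Function.update_eq_self k y]
    exact key y (y k)
  have hupd : Function.update x k 0 = Function.update y k 0 := by
    funext l
    rcases eq_or_ne l k with rfl | hl
    · simp
    · simp [Function.update_of_ne hl, hxy l hl]
  rw [hx, hy, hupd]

/-- If a twice continuously differentiable `f` on `ℝ^d` has identically vanishing mixed
second partial derivative `∂²f/∂xᵢ∂xⱼ` for `i ≠ j`, then `f` decomposes as the sum of a
function not depending on coordinate `i` and a function not depending on coordinate `j`. -/
theorem decomposition_of_mixed_partial_zero {d : ℕ} (f : (Fin d → ℝ) → ℝ)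
    (hf : ContDiff ℝ 2 f) (i j : Fin d) (hij : i ≠ j)
    (h : ∀ x : Fin d → ℝ,
      fderiv ℝ (fun y => fderiv ℝ f y (Pi.single i 1)) x (Pi.single j 1) = 0) :
    ∃ f₁ f₂ : (Fin d → ℝ) → ℝ,
      (∀ x y : Fin d → ℝ, (∀ k, k ≠ i → x k = y k) → f₁ x = f₁ y) ∧
      (∀ x y : Fin d → ℝ, (∀ k, k ≠ j → x k = y k) → f₂ x = f₂ y) ∧
      (∀ x, f x = f₁ x + f₂ x) := by
  have hfd : Differentiable ℝ f := hf.differentiable (by norm_num)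
  have hC1 : ContDiff ℝ 1 (fderiv ℝ f) := hf.fderiv_right (by norm_num)
  have hF1 : Differentiable ℝ (fun y => fderiv ℝ f y (Pi.single i 1)) :=
    (hC1.differentiable one_ne_zero).clm_apply (differentiable_const _)
  -- ∂ᵢ f is constant along direction j
  have step1 : ∀ x : Fin d → ℝ,
      fderiv ℝ f x (Pi.single i 1) = fderiv ℝ f (Function.update x j 0) (Pi.single i 1) := by
    intro x
    exact const_along_of_fderiv_zero _ hF1 j h x (Function.update x j 0)
      (fun l hl => (Function.update_of_ne hl 0 x).symm)
  -- the continuous linear map x ↦ update x j 0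
  set u : (Fin d → ℝ) →L[ℝ] (Fin d → ℝ) :=
    ContinuousLinearMap.id ℝ _ - (ContinuousLinearMap.proj j).smulRight (Pi.single j 1) with hu
  have huval : ∀ x : Fin d → ℝ, u x = Function.update x j 0 := by
    intro x
    funext l
    rcases eq_or_ne l j with rfl | hl
    · simp [hu]
    · simp [hu, Function.update_of_ne hl, Pi.single_eq_of_ne hl]
  have huei : u (Pi.single i 1) = Pi.single i 1 := by
    rw [huval]
    funext l
    rcases eq_or_ne l j with rfl | hl
    · simp [Pi.single_eq_of_ne (Ne.symm hij)]
    · simp [Function.update_of_ne hl]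
  set f₂ : (Fin d → ℝ) → ℝ := fun x => f (Function.update x j 0) with hf₂
  set f₁ : (Fin d → ℝ) → ℝ := fun x => f x - f (Function.update x j 0) with hf₁
  have hcomp : ∀ x : Fin d → ℝ,
      HasFDerivAt f₂ ((fderiv ℝ f (Function.update x j 0)).comp u) x := by
    intro x
    have := ((hfd (u x)).hasFDerivAt).comp x u.hasFDerivAt
    have heq : f ∘ u = f₂ := by
      funext z; simp [hf₂, huval]
    rw [heq] at this
    rwa [huval] at this
  have hf₁diff : Differentiable ℝ f₁ := hfd.sub (fun x => (hcomp x).differentiableAt)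
  have h1 : ∀ x : Fin d → ℝ, fderiv ℝ f₁ x (Pi.single i 1) = 0 := by
    intro x
    have hfx := (hfd x).hasFDerivAt
    have hsub := (hfx.sub (hcomp x)).fderiv
    have : fderiv ℝ f₁ x (Pi.single i 1)
        = fderiv ℝ f x (Pi.single i 1)
          - fderiv ℝ f (Function.update x j 0) (u (Pi.single i 1)) := by
      rw [show f₁ = f - f₂ from rfl, hsub]; rfl
    rw [this, huei, ← step1, sub_self]
  refine ⟨f₁, f₂, ?_, ?_, ?_⟩
  · exact const_along_of_fderiv_zero f₁ hf₁diff i h1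
  · intro x y hxy
    have hupd : Function.update x j 0 = Function.update y j 0 := by
      funext l
      rcases eq_or_ne l j with rfl | hl
      · simp
      · simp [Function.update_of_ne hl, hxy l hl]
    simp [hf₂, hupd]
  · intro x
    simp [hf₁, hf₂]
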